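/- Let X be a compact Hausdorff space, X₀ ⊆ X dense, and f : X → ℝ a bounded function that is not continuous at a point x ∈ X, where each member of a family A ⊆ C(X) can approximate f pointwise on finite sets (i.e., f lies in the pointwise closure of A). Then there exist sequences (fₙ) in A and (xₘ) in X₀ such that limₙ limₘ fₙ(xₘ) and limₘ limₙ fₙ(xₘ) both exist and are distinct. -/

import Mathlib

open Filter Topology

private noncomputable def histRec' {α : Type*} (step : (n : ℕ) → (∀ j, j < n → α) → α) : ℕ → α
  | n => step n (fun j h => histRec' step j)
  decreasing_by exact h

private lemma aux_tendsto {u : ℕ → ℝ} {c : ℝ} (N₀ : ℕ)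
    (h : ∀ k, N₀ ≤ k → |u k - c| < 1 / ((k : ℝ) + 1)) :
    Tendsto u atTop (𝓝 c) := by
  rw [← tendsto_sub_nhds_zero_iff]
  refine squeeze_zero_norm' ?_ tendsto_one_div_add_atTop_nhds_zero_nat
  filter_upwards [eventually_ge_atTop N₀] with k hk
  simpa [Real.norm_eq_abs] using (h k hk).le

/-- The interleaving construction in the proof of Grothendieck's criterion: if a bounded
function `f` in the pointwise closure of `A ⊆ C(X)` fails to be continuous at some point,
then there are a sequence in `A` and a sequence in a dense set `X₀` whose two iterated
limits exist and differ. -/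
theorem discontinuous_pointwise_limit_gives_double_limit_failure
    {X : Type*} [TopologicalSpace X] [CompactSpace X] [T2Space X]
    (X₀ : Set X) (hX₀ : Dense X₀)
    (A : Set C(X, ℝ)) (f : X → ℝ)
    (hbdd : ∃ r : ℝ, ∀ y, |f y| ≤ r)
    (x : X) (hx : ¬ ContinuousAt f x)
    (hcl : f ∈ closure ((fun g : C(X, ℝ) => (g : X → ℝ)) '' A)) :
    ∃ (fs : ℕ → C(X, ℝ)) (xs : ℕ → X),
      (∀ n, fs n ∈ A) ∧ (∀ m, xs m ∈ X₀) ∧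
      ∃ (a b : ℕ → ℝ) (L₁ L₂ : ℝ),
        (∀ n, Tendsto (fun m => fs n (xs m)) atTop (𝓝 (a n))) ∧
        (∀ m, Tendsto (fun n => fs n (xs m)) atTop (𝓝 (b m))) ∧
        Tendsto a atTop (𝓝 L₁) ∧ Tendsto b atTop (𝓝 L₂) ∧ L₁ ≠ L₂ := by
  classical
  -- Step 1: extract a finite-set approximation property from the closure hypothesis.
  have approx : ∀ (s : Finset X) (δ : ℝ), 0 < δ →
      ∃ g : C(X,ℝ), g ∈ A ∧ ∀ y ∈ s, |g y - f y| < δ := by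
    intro s δ hδ
    have hUo : IsOpen {h : X → ℝ | ∀ y ∈ s, |h y - f y| < δ} := by
      have he : {h : X → ℝ | ∀ y ∈ s, |h y - f y| < δ}
          = ⋂ y ∈ s, (fun h : X → ℝ => h y) ⁻¹' (Metric.ball (f y) δ) := by
        ext h
        simp [Real.dist_eq]
      rw [he]
      exact isOpen_biInter_finset fun y _ =>
        (Metric.isOpen_ball).preimage (continuous_apply y)
    have hfU : f ∈ {h : X → ℝ | ∀ y ∈ s, |h y - f y| < δ} := by
      intro y _; simpa using hδ
    obtain ⟨g', hg'U, hg'S⟩ := _root_.mem_closure_iff.mp hcl _ hUo hfU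
    obtain ⟨g, hgA, rfl⟩ := hg'S
    exact ⟨g, hgA, hg'U⟩
  -- Step 2: find a point `p` and a value `ℓ ≠ f p` that `f` clusters to along `X₀` near `p`.
  have key : ∃ (p : X) (ℓ : ℝ), ℓ ≠ f p ∧
      ∀ U ∈ 𝓝 p, ∀ δ : ℝ, 0 < δ → ∃ z, z ∈ X₀ ∧ z ∈ U ∧ |f z - ℓ| < δ := by
    obtain ⟨r, hr⟩ := hbdd
    by_contra hcon
    push_neg at hcon
    have tend : ∀ p : X, Tendsto f (𝓝[X₀] p) (𝓝 (f p)) := by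
      intro p
      by_contra hnt
      rw [Metric.tendsto_nhds] at hnt
      push_neg at hnt
      obtain ⟨δ, hδ, hfreq⟩ := hnt
      have hfreq' : ∃ᶠ z in 𝓝[X₀] p, δ ≤ dist (f z) (f p) := by
        simpa [not_lt] using hfreq
      have hne : (𝓝[X₀] p ⊓ 𝓟 {z | δ ≤ dist (f z) (f p)}).NeBot := by
        rwa [Filter.frequently_iff_neBot] at hfreq'
      set F' := 𝓝[X₀] p ⊓ 𝓟 {z | δ ≤ dist (f z) (f p)} with hF'
      haveI : (Filter.map f F').NeBot := hne.map f
      have hle : Filter.map f F' ≤ 𝓟 (Set.Icc (-r) r) := by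
        rw [le_principal_iff, mem_map]
        refine mem_of_superset univ_mem fun z _ => ?_
        have := hr z
        simp only [Set.mem_preimage, Set.mem_Icc]
        constructor <;> [linarith [abs_le.mp this |>.1]; exact (abs_le.mp this).2]
      obtain ⟨ℓ, hℓIcc, hclu⟩ := isCompact_Icc.exists_clusterPt hle
      have hfar : δ ≤ dist ℓ (f p) := by
        have h1 : Filter.map f F' ≤ 𝓟 {y | δ ≤ dist y (f p)} := by
          rw [le_principal_iff, mem_map]
          exact mem_of_superset (mem_inf_of_right (mem_principal_self _)) fun z hz => hz
        have h2 : ClusterPt ℓ (𝓟 {y | δ ≤ dist y (f p)}) := hclu.mono h1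
        have h3 : ℓ ∈ closure {y | δ ≤ dist y (f p)} := mem_closure_iff_clusterPt.mpr h2
        have hcl : IsClosed {y : ℝ | δ ≤ dist y (f p)} :=
          isClosed_le continuous_const (continuous_id.dist continuous_const)
        exact hcl.closure_subset h3
      have hℓne : ℓ ≠ f p := by
        intro h; rw [h, dist_self] at hfar; linarith
      obtain ⟨U, hU, δ', hδ', hfarU⟩ := hcon p ℓ hℓne
      have hS : U ∩ X₀ ∈ F' := by
        refine mem_inf_of_left ?_
        exact inter_mem (mem_nhdsWithin_of_mem_nhds hU) self_mem_nhdsWithin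
      have hV : f '' (U ∩ X₀) ∈ Filter.map f F' :=
        mem_map.mpr (mem_of_superset hS (Set.subset_preimage_image f _))
      obtain ⟨y, hy1, hy2⟩ := (clusterPt_iff_nonempty.mp hclu) (Metric.ball_mem_nhds ℓ hδ') hV
      obtain ⟨z, ⟨hzU, hzX₀⟩, rfl⟩ := hy2
      have := hfarU z hzX₀ hzU
      rw [Metric.mem_ball, Real.dist_eq] at hy1
      linarith
    -- Hence `f` is continuous at `x`, contradiction.
    apply hx
    rw [ContinuousAt, Metric.tendsto_nhds]
    intro ε hε
    have h2 := (Metric.tendsto_nhds.mp (tend x)) (ε/2) (by positivity)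
    rw [eventually_iff, mem_nhdsWithin] at h2
    obtain ⟨U, hUo, hxU, hU⟩ := h2
    have claim : ∀ q ∈ U, dist (f q) (f x) ≤ ε/2 := by
      intro q hq
      haveI : (𝓝[X₀] q).NeBot := mem_closure_iff_nhdsWithin_neBot.mp (hX₀ q)
      have hev : ∀ᶠ z in 𝓝[X₀] q, f z ∈ {y : ℝ | dist y (f x) ≤ ε/2} := by
        filter_upwards [mem_nhdsWithin_of_mem_nhds (hUo.mem_nhds hq), self_mem_nhdsWithin]
          with z hzU hzX₀
        exact le_of_lt (hU ⟨hzU, hzX₀⟩)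
      have hcl : IsClosed {y : ℝ | dist y (f x) ≤ ε/2} :=
        isClosed_le (continuous_id.dist continuous_const) continuous_const
      exact hcl.mem_of_tendsto (tend q) hev
    filter_upwards [hUo.mem_nhds hxU] with q hq
    exact lt_of_le_of_lt (claim q hq) (by linarith)
  obtain ⟨p, ℓ, hℓ, K⟩ := key
  -- Step 3: the interleaving construction.
  have stepEx : ∀ (n : ℕ) (prev : ∀ j, j < n → C(X,ℝ) × X), ∃ gz : C(X,ℝ) × X,
      gz.1 ∈ A ∧ |gz.1 p - f p| < 1/((n:ℝ)+1) ∧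
      (∀ j (h : j < n), |gz.1 ((prev j h).2) - f ((prev j h).2)| < 1/((n:ℝ)+1)) ∧
      gz.2 ∈ X₀ ∧ |f gz.2 - ℓ| < 1/((n:ℝ)+1) ∧ |gz.1 gz.2 - gz.1 p| < 1/((n:ℝ)+1) ∧
      (∀ j (h : j < n), |(prev j h).1 gz.2 - (prev j h).1 p| < 1/((n:ℝ)+1)) := by
    intro n prev
    have hpos : (0:ℝ) < 1/((n:ℝ)+1) := by positivity
    set s : Finset X :=
      insert p ((Finset.univ : Finset (Fin n)).image (fun j : Fin n => (prev j.1 j.2).2)) with hs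
    obtain ⟨g, hgA, hg⟩ := approx s _ hpos
    set U : Set X := {z | |g z - g p| < 1/((n:ℝ)+1)} ∩
      ⋂ j : Fin n, {z | |(prev j.1 j.2).1 z - (prev j.1 j.2).1 p| < 1/((n:ℝ)+1)} with hUdef
    have hUo : IsOpen U := by
      apply IsOpen.inter
      · exact isOpen_lt ((g.continuous.sub continuous_const).abs) continuous_const
      · exact isOpen_iInter_of_finite fun j => isOpen_lt
          (((prev j.1 j.2).1.continuous.sub continuous_const).abs) continuous_const
    have hpU : p ∈ U := by
      refine ⟨by simpa using hpos, ?_⟩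
      simp only [Set.mem_iInter, Set.mem_setOf_eq]
      intro j
      simpa using hpos
    obtain ⟨z, hzX₀, hzU, hzℓ⟩ := K U (hUo.mem_nhds hpU) _ hpos
    refine ⟨(g, z), hgA, ?_, ?_, hzX₀, hzℓ, ?_, ?_⟩
    · exact hg p (Finset.mem_insert_self _ _)
    · intro j h
      refine hg _ (Finset.mem_insert_of_mem ?_)
      exact Finset.mem_image.mpr ⟨⟨j, h⟩, Finset.mem_univ _, rfl⟩
    · exact hzU.1
    · intro j h
      exact Set.mem_iInter.mp hzU.2 ⟨j, h⟩
  set step : (n : ℕ) → (∀ j, j < n → C(X,ℝ) × X) → C(X,ℝ) × X :=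
    fun n prev => Classical.choose (stepEx n prev) with hstep
  set seq : ℕ → C(X,ℝ) × X := histRec' step with hseq
  have seqEq : ∀ n, seq n = step n (fun j _ => seq j) := by
    intro n; rw [hseq]; rw [histRec']
  set fs : ℕ → C(X,ℝ) := fun n => (seq n).1 with hfs
  set xs : ℕ → X := fun n => (seq n).2 with hxs
  have spec : ∀ n, fs n ∈ A ∧ |fs n p - f p| < 1/((n:ℝ)+1) ∧
      (∀ j, j < n → |fs n (xs j) - f (xs j)| < 1/((n:ℝ)+1)) ∧
      xs n ∈ X₀ ∧ |f (xs n) - ℓ| < 1/((n:ℝ)+1) ∧ |fs n (xs n) - fs n p| < 1/((n:ℝ)+1) ∧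
      (∀ j, j < n → |fs j (xs n) - fs j p| < 1/((n:ℝ)+1)) := by
    intro n
    have h := Classical.choose_spec (stepEx n (fun j _ => seq j))
    have e : seq n = Classical.choose (stepEx n (fun j _ => seq j)) := seqEq n
    rw [hfs, hxs]
    simp only [← e] at h
    exact h
  refine ⟨fs, xs, fun n => (spec n).1, fun m => (spec m).2.2.2.1,
    fun n => fs n p, fun m => f (xs m), f p, ℓ, ?_, ?_, ?_, ?_, (Ne.symm hℓ)⟩
  · intro n
    refine aux_tendsto n fun m hm => ?_
    rcases eq_or_lt_of_le hm with h | h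
    · subst h; exact (spec n).2.2.2.2.2.1
    · exact (spec m).2.2.2.2.2.2 n h
  · intro m
    refine aux_tendsto (m+1) fun n hn => ?_
    exact (spec n).2.2.1 m hn
  · exact aux_tendsto 0 fun n _ => (spec n).2.1
  · exact aux_tendsto 0 fun m _ => (spec m).2.2.2.2.1
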